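/- arXiv:1606.00610 — 6 statements merged into one kernel-verified Lean document; each statement's English description precedes it below -/
import Mathlib

section
/- Let X₁,…,X_d ∈ ℝⁿ span ℝⁿ, let λ₁,…,λ_d ∈ ℝ, let Δ = {μ ∈ (ℝⁿ)* : ⟨μ, X_j⟩ ≥ λ_j for j = 1,…,d}, and let π : ℝ^d → ℝⁿ be the linear map with π(e_j) = X_j. Then the zero level set of the reduced moment map equals the J-preimage of π*(Δ); explicitly, {z ∈ ℂ^d : for every v = (v₁,…,v_d) ∈ ker π, Σ_{j=1}^d v_j(|z_j|² + λ_j) = 0} = {z ∈ ℂ^d : there exists μ ∈ Δ with |z_j|² + λ_j = ⟨μ, X_j⟩ for all j = 1,…,d}. -/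
/-- The zero level set `Ψ⁻¹(0)` of the moment map for the kernel subgroup in the generalized
Delzant construction equals `J⁻¹(π*(Δ))`: a point `z ∈ ℂ^d` satisfies
`∑ⱼ vⱼ(|zⱼ|² + λⱼ) = 0` for every `v ∈ ker π` iff there is `μ ∈ Δ` with
`|zⱼ|² + λⱼ = ⟨μ, Xⱼ⟩` for all `j`. -/
theorem level_set_eq_preimage {n d : ℕ}
    (X : Fin d → (Fin n → ℝ)) (lam : Fin d → ℝ)
    (hspan : Submodule.span ℝ (Set.range X) = ⊤)
    (Δ : Set (Module.Dual ℝ (Fin n → ℝ)))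
    (hΔ : Δ = {μ : Module.Dual ℝ (Fin n → ℝ) | ∀ j : Fin d, lam j ≤ μ (X j)}) :
    {z : Fin d → ℂ | ∀ v : Fin d → ℝ, (∑ j : Fin d, v j • X j) = 0 →
        (∑ j : Fin d, v j * (‖z j‖ ^ 2 + lam j)) = 0}
      = {z : Fin d → ℂ | ∃ μ ∈ Δ, ∀ j : Fin d, ‖z j‖ ^ 2 + lam j = μ (X j)} := by
  ext z
  simp only [Set.mem_setOf_eq]
  constructor
  · intro hz
    -- the weight vector
    set w : Fin d → ℝ := fun j => ‖z j‖ ^ 2 + lam j with hw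
    -- π : ℝ^d → ℝ^n
    set π : (Fin d → ℝ) →ₗ[ℝ] (Fin n → ℝ) := Fintype.linearCombination ℝ X with hπ
    have hsurj : Function.Surjective π := by
      rw [← LinearMap.range_eq_top, hπ, Fintype.range_linearCombination, hspan]
    -- g : ℝ^d → ℝ
    set g : (Fin d → ℝ) →ₗ[ℝ] ℝ := Fintype.linearCombination ℝ w with hg
    have hker : LinearMap.ker π ≤ LinearMap.ker g := by
      intro v hv
      rw [LinearMap.mem_ker] at hv ⊢
      rw [hg, Fintype.linearCombination_apply]
      rw [hπ, Fintype.linearCombination_apply] at hv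
      simpa [smul_eq_mul] using hz v hv
    -- factor g through π
    let e := π.quotKerEquivOfSurjective hsurj
    let μ : Module.Dual ℝ (Fin n → ℝ) :=
      (Submodule.liftQ (LinearMap.ker π) g hker).comp (e.symm : _ →ₗ[ℝ] _)
    have hμπ : ∀ v, μ (π v) = g v := by
      intro v
      have h1 : e ((LinearMap.ker π).mkQ v) = π v := rfl
      have h2 : e.symm (π v) = (LinearMap.ker π).mkQ v := by
        rw [← h1, LinearEquiv.symm_apply_apply]
      simp only [μ, LinearMap.comp_apply, LinearEquiv.coe_coe, h2]
      rfl
    have hμX : ∀ j, μ (X j) = w j := by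
      intro j
      have hπe : π (Pi.single j 1) = X j := by
        rw [hπ, Fintype.linearCombination_apply_single, one_smul]
      have hge : g (Pi.single j 1) = w j := by
        rw [hg, Fintype.linearCombination_apply_single, one_smul]
      rw [← hπe, hμπ, hge]
    refine ⟨μ, ?_, fun j => (hμX j).symm⟩
    rw [hΔ]
    intro j
    rw [hμX j]
    have := sq_nonneg ‖z j‖
    simp only [hw]
    linarith
  · rintro ⟨μ, hμ, hμX⟩ v hv
    calc ∑ j : Fin d, v j * (‖z j‖ ^ 2 + lam j)
        = ∑ j : Fin d, v j * μ (X j) := by simp_rw [hμX]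
      _ = μ (∑ j : Fin d, v j • X j) := by rw [map_sum]; simp [map_smul, smul_eq_mul]
      _ = 0 := by rw [hv, map_zero]
end

section
/- Let X₁,…,X_d ∈ ℝⁿ span ℝⁿ, let λ₁,…,λ_d ∈ ℝ, let π : ℝ^d → ℝⁿ be the linear map with π(e_j) = X_j, and suppose the polyhedron Δ = {μ ∈ (ℝⁿ)* : ⟨μ, X_j⟩ ≥ λ_j for j = 1,…,d} is bounded. Then the set Z = {z ∈ ℂ^d : for every v ∈ ker π, Σ_{j=1}^d v_j(|z_j|² + λ_j) = 0} is compact. -/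
/-- If the polyhedron `Δ = {μ : ⟨μ,X_j⟩ ≥ λ_j}` is bounded, then the zero level set
`Z = Ψ⁻¹(0) = {z ∈ ℂ^d : ∑ⱼ vⱼ(|zⱼ|² + λⱼ) = 0 for all v ∈ ker π}` is compact. -/
theorem level_set_compact_of_bounded {n d : ℕ}
    (X : Fin d → (Fin n → ℝ)) (lam : Fin d → ℝ)
    (hspan : Submodule.span ℝ (Set.range X) = ⊤)
    (Δ : Set (Module.Dual ℝ (Fin n → ℝ)))
    (hΔ : Δ = {μ : Module.Dual ℝ (Fin n → ℝ) | ∀ j : Fin d, lam j ≤ μ (X j)})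
    (hbounded : ∃ R : ℝ, ∀ μ ∈ Δ, ∀ x : Fin n → ℝ, |μ x| ≤ R * ‖x‖) :
    IsCompact {z : Fin d → ℂ | ∀ v : Fin d → ℝ, (∑ j : Fin d, v j • X j) = 0 →
        (∑ j : Fin d, v j * (‖z j‖ ^ 2 + lam j)) = 0} := by
  obtain ⟨R, hR⟩ := hbounded
  set S := {z : Fin d → ℂ | ∀ v : Fin d → ℝ, (∑ j : Fin d, v j • X j) = 0 →
        (∑ j : Fin d, v j * (‖z j‖ ^ 2 + lam j)) = 0} with hS
  rw [Metric.isCompact_iff_isClosed_bounded]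
  constructor
  · have : S = ⋂ v : {v : Fin d → ℝ // (∑ j : Fin d, v j • X j) = 0},
        {z : Fin d → ℂ | (∑ j : Fin d, (v : Fin d → ℝ) j * (‖z j‖ ^ 2 + lam j)) = 0} := by
      ext z
      simp [hS, Set.mem_iInter, Subtype.forall]
    rw [this]
    refine isClosed_iInter fun v => isClosed_eq ?_ continuous_const
    refine continuous_finset_sum _ fun j _ => ?_
    exact continuous_const.mul
      (((continuous_norm.comp (continuous_apply j)).pow 2).add continuous_const)
  · -- boundedness
    set B : ℝ := ∑ i : Fin d, max 0 (R * ‖X i‖ - lam i) with hB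
    refine Metric.isBounded_closedBall (x := (0 : Fin d → ℂ)) (r := Real.sqrt B) |>.subset ?_
    intro z hz
    rw [Metric.mem_closedBall, dist_zero_right]
    rw [pi_norm_le_iff_of_nonneg (Real.sqrt_nonneg _)]
    intro j
    -- construct μ
    set w : Fin d → ℝ := fun j => ‖z j‖ ^ 2 + lam j with hw
    let π : (Fin d → ℝ) →ₗ[ℝ] (Fin n → ℝ) := ∑ i, (LinearMap.proj i).smulRight (X i)
    have hπ : ∀ v, π v = ∑ i, v i • X i := fun v => by
      simp [π, LinearMap.sum_apply]
    have hπs : ∀ i, π (Pi.single i 1) = X i := by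
      intro i
      rw [hπ]
      simp [Pi.single_apply, ite_smul]
    have hsurj : LinearMap.range π = ⊤ := by
      rw [← top_le_iff, ← hspan, Submodule.span_le]
      rintro x ⟨i, rfl⟩
      exact ⟨Pi.single i 1, hπs i⟩
    let f : (Fin d → ℝ) →ₗ[ℝ] ℝ := ∑ i, (LinearMap.proj i).smulRight (w i)
    have hf : ∀ v, f v = ∑ i, v i * w i := fun v => by
      simp [f, LinearMap.sum_apply, smul_eq_mul]
    have hfs : ∀ i, f (Pi.single i 1) = w i := by
      intro i
      rw [hf]
      simp [Pi.single_apply, ite_mul]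
    have hker : LinearMap.ker π ≤ LinearMap.ker f := by
      intro v hv
      rw [LinearMap.mem_ker] at hv ⊢
      rw [hπ] at hv
      rw [hf]
      exact hz v hv
    obtain ⟨g, hg⟩ := π.exists_rightInverse_of_surjective hsurj
    set μ : Module.Dual ℝ (Fin n → ℝ) := f.comp g with hμdef
    have hμ : ∀ x, μ (π x) = f x := by
      intro x
      have hmem : g (π x) - x ∈ LinearMap.ker π := by
        rw [LinearMap.mem_ker, map_sub, sub_eq_zero]
        exact congrArg (fun h => h (π x)) hg
      have h2 := hker hmem
      rw [LinearMap.mem_ker, map_sub, sub_eq_zero] at h2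
      exact h2
    have hμX : ∀ i, μ (X i) = w i := by
      intro i
      rw [← hπs i, hμ, hfs]
    have hμΔ : μ ∈ Δ := by
      rw [hΔ]
      intro i
      rw [hμX i]
      show lam i ≤ ‖z i‖ ^ 2 + lam i
      nlinarith [sq_nonneg (‖z i‖)]
    have hb : ‖z j‖ ^ 2 ≤ B := by
      have h1 : ‖z j‖ ^ 2 + lam j ≤ R * ‖X j‖ := by
        have h := hR μ hμΔ (X j)
        rw [hμX j] at h
        have h' := le_trans (le_abs_self _) h
        simpa using h'
      have h2 : ‖z j‖ ^ 2 ≤ max 0 (R * ‖X j‖ - lam j) :=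
        le_max_of_le_right (by linarith)
      refine h2.trans ?_
      exact Finset.single_le_sum (f := fun i => max (0:ℝ) (R * ‖X i‖ - lam i))
        (fun i _ => le_max_left 0 _) (Finset.mem_univ j)
    have hB0 : (0:ℝ) ≤ B := Finset.sum_nonneg fun i _ => le_max_left 0 _
    exact (Real.le_sqrt (norm_nonneg (z j)) hB0).mpr hb
end

section
/- Let X₁,…,X_d ∈ ℝⁿ span ℝⁿ, let λ₁,…,λ_d ∈ ℝ, let Δ = {μ ∈ (ℝⁿ)* : ⟨μ, X_j⟩ ≥ λ_j for j = 1,…,d}, and let π : ℝ^d → ℝⁿ be the linear map with π(e_j) = X_j. Then for every μ ∈ (ℝⁿ)*: μ ∈ Δ if and only if there exists z ∈ ℂ^d with |z_j|² + λ_j = ⟨μ, X_j⟩ for all j = 1,…,d and Σ_{j=1}^d v_j(|z_j|² + λ_j) = 0 for every v ∈ ker π. In other words, the image of the level set Ψ⁻¹(0) under the induced moment map Φ = (π*)⁻¹ ∘ J is exactly Δ. -/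
/-- The image of the level set `Ψ⁻¹(0)` under the induced moment map `Φ = (π*)⁻¹ ∘ J` is
exactly `Δ`: a functional `μ` lies in `Δ` iff there is `z ∈ ℂ^d` with
`|zⱼ|² + λⱼ = ⟨μ, Xⱼ⟩` for all `j` and `∑ⱼ vⱼ(|zⱼ|² + λⱼ) = 0` for all `v ∈ ker π`. -/
theorem moment_map_image_eq_polyhedron {n d : ℕ}
    (X : Fin d → (Fin n → ℝ)) (lam : Fin d → ℝ)
    (hspan : Submodule.span ℝ (Set.range X) = ⊤)
    (Δ : Set (Module.Dual ℝ (Fin n → ℝ)))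
    (hΔ : Δ = {μ : Module.Dual ℝ (Fin n → ℝ) | ∀ j : Fin d, lam j ≤ μ (X j)}) :
    ∀ μ : Module.Dual ℝ (Fin n → ℝ), μ ∈ Δ ↔
      ∃ z : Fin d → ℂ, (∀ j : Fin d, ‖z j‖ ^ 2 + lam j = μ (X j)) ∧
        ∀ v : Fin d → ℝ, (∑ j : Fin d, v j • X j) = 0 →
          (∑ j : Fin d, v j * (‖z j‖ ^ 2 + lam j)) = 0 := by
  intro μ
  subst hΔ
  constructor
  · intro hμ
    refine ⟨fun j => (Real.sqrt (μ (X j) - lam j) : ℂ), ?_, ?_⟩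
    · intro j
      have h : (0:ℝ) ≤ μ (X j) - lam j := sub_nonneg.mpr (hμ j)
      rw [Complex.norm_real, Real.norm_eq_abs, abs_of_nonneg (Real.sqrt_nonneg _),
        Real.sq_sqrt h]
      ring
    · intro v hv
      have h : ∀ j, ‖((Real.sqrt (μ (X j) - lam j) : ℝ) : ℂ)‖ ^ 2 + lam j = μ (X j) := by
        intro j
        have h : (0:ℝ) ≤ μ (X j) - lam j := sub_nonneg.mpr (hμ j)
        rw [Complex.norm_real, Real.norm_eq_abs, abs_of_nonneg (Real.sqrt_nonneg _),
          Real.sq_sqrt h]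
        ring
      calc (∑ j : Fin d, v j * (‖((Real.sqrt (μ (X j) - lam j) : ℝ) : ℂ)‖ ^ 2 + lam j))
          = ∑ j : Fin d, v j * μ (X j) := by
            exact Finset.sum_congr rfl fun j _ => by rw [h j]
        _ = μ (∑ j : Fin d, v j • X j) := by
            rw [map_sum]
            exact Finset.sum_congr rfl fun j _ => by rw [map_smul]; rfl
        _ = 0 := by rw [hv]; simp
  · rintro ⟨z, hz, -⟩
    intro j
    rw [← hz j]
    nlinarith [sq_nonneg (‖z j‖)]
end

section
/- Let φ = (1+√5)/2 and set X₁ = (−1/(2φ), −√(2+φ)/2), X₂ = (−φ/2, √(2+φ)/(2φ)), X₃ = (φ/2, √(2+φ)/(2φ)), X₄ = (1/(2φ), −√(2+φ)/2). Then {z ∈ ℂ⁴ : there exists μ ∈ ℝ² with |z₁|² − 1 = μ·X₁, |z₂|² = μ·X₂, |z₃|² = μ·X₃, |z₄|² − 1 = μ·X₄} = {z ∈ ℂ⁴ : φ|z₁|² + |z₂|² + φ|z₃|² = φ and −|z₁|² + |z₂|² + φ|z₄|² = φ − 1}, where · denotes the standard scalar product on ℝ². -/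
/-- The zero level set of the generalized Delzant construction for the Penrose kite:
`J(z) ∈ range π*` is equivalent to the two quadratic equations
`φ|z₁|² + |z₂|² + φ|z₃|² = φ` and `−|z₁|² + |z₂|² + φ|z₄|² = φ − 1`. -/
theorem penrose_kite_level_set (φ : ℝ) (hφ : φ = (1 + Real.sqrt 5) / 2)
    (X1 X2 X3 X4 : ℝ × ℝ)
    (hX1 : X1 = (-(1 / (2 * φ)), -(Real.sqrt (2 + φ) / 2)))
    (hX2 : X2 = (-(φ / 2), Real.sqrt (2 + φ) / (2 * φ)))
    (hX3 : X3 = (φ / 2, Real.sqrt (2 + φ) / (2 * φ)))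
    (hX4 : X4 = (1 / (2 * φ), -(Real.sqrt (2 + φ) / 2))) :
    {z : Fin 4 → ℂ | ∃ μ : ℝ × ℝ,
        ‖z 0‖ ^ 2 - 1 = μ.1 * X1.1 + μ.2 * X1.2 ∧
        ‖z 1‖ ^ 2 = μ.1 * X2.1 + μ.2 * X2.2 ∧
        ‖z 2‖ ^ 2 = μ.1 * X3.1 + μ.2 * X3.2 ∧
        ‖z 3‖ ^ 2 - 1 = μ.1 * X4.1 + μ.2 * X4.2} =
      {z : Fin 4 → ℂ |
        φ * ‖z 0‖ ^ 2 + ‖z 1‖ ^ 2 + φ * ‖z 2‖ ^ 2 = φ ∧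
        -‖z 0‖ ^ 2 + ‖z 1‖ ^ 2 + φ * ‖z 3‖ ^ 2 = φ - 1} := by
  have h5 : Real.sqrt 5 ^ 2 = 5 := Real.sq_sqrt (by norm_num)
  have h5pos : (0:ℝ) ≤ Real.sqrt 5 := Real.sqrt_nonneg 5
  have hp : φ ^ 2 = φ + 1 := by rw [hφ]; nlinarith [h5]
  have hφpos : 0 < φ := by rw [hφ]; positivity
  have hφne : φ ≠ 0 := ne_of_gt hφpos
  set s : ℝ := Real.sqrt (2 + φ) with hsdef
  have hs2 : s ^ 2 = 2 + φ := Real.sq_sqrt (by positivity)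
  have hspos : 0 < s := Real.sqrt_pos.mpr (by positivity)
  have hsne : s ≠ 0 := ne_of_gt hspos
  have hdiv : 1 / (2 * φ) = (φ - 1) / 2 := by
    field_simp
    nlinarith [hp]
  have hdiv2 : s / (2 * φ) = s * (φ - 1) / 2 := by
    rw [div_eq_mul_one_div, hdiv]; ring
  subst hX1 hX2 hX3 hX4
  ext z
  simp only [Set.mem_setOf_eq]
  rw [hdiv, hdiv2] at *
  constructor
  · rintro ⟨μ, h1, h2, h3, h4⟩
    constructor
    · linear_combination φ * h1 + h2 + φ * h3 + (s * μ.2 / 2) * hp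
    · linear_combination -h1 + h2 + φ * h4 + (μ.1 / 2) * hp
  · rintro ⟨g1, g2⟩
    set a := ‖z 0‖ ^ 2 with ha
    set b := ‖z 1‖ ^ 2 with hb
    set c := ‖z 2‖ ^ 2 with hc
    set d := ‖z 3‖ ^ 2 with hd
    refine ⟨((c - b) * (φ - 1), φ * (b + c) / s), ?_, ?_, ?_, ?_⟩ <;>
        field_simp
    · linear_combination (2 * (φ - 1)) * g1 + (1 * (c - b) - 2 * (a + c - 1)) * hp
    · linear_combination (-(2 * b)) * hp
    · linear_combination (-(2 * c)) * hp
    · linear_combination (2 * (2 - φ)) * g1 + (2 * (φ - 1)) * g2 +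
        (2 * (a + c - 1) - 2 * (d - 1) + 1 * (b - c)) * hp
end

section
/- Let φ = (1+√5)/2, let Y₀ = (1,0), Y₁ = (1/(2φ), √(2+φ)/2), Y₂ = (−φ/2, √(2+φ)/(2φ)), Y₃ = (−φ/2, −√(2+φ)/(2φ)), Y₄ = (1/(2φ), −√(2+φ)/2), and let Q ⊆ ℝ² be the set of integer linear combinations of Y₀, Y₁, Y₂, Y₃, Y₄. Set X₁ = −Y₁, X₂ = Y₂, X₃ = −Y₃, X₄ = Y₄. Then {x ∈ ℝ⁴ : x₁X₁ + x₂X₂ + x₃X₃ + x₄X₄ ∈ Q} = {(s − (φ−1)t + k₁, (φ−1)(s+t) + k₂, s + k₃, t + k₄) : s, t ∈ ℝ, (k₁,k₂,k₃,k₄) ∈ ℤ⁴}. -/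
/-- Computation of the group `N` in the Delzant construction for the Penrose kite, at the
level of lifts in `ℝ⁴`: with `X₁ = −Y₁`, `X₂ = Y₂`, `X₃ = −Y₃`, `X₄ = Y₄` and `Q` the
pentagonal quasilattice, `{x ∈ ℝ⁴ : ∑ xⱼXⱼ ∈ Q}` equals
`{(s − (φ−1)t + k₁, (φ−1)(s+t) + k₂, s + k₃, t + k₄) : s, t ∈ ℝ, k ∈ ℤ⁴}`. -/
theorem penrose_kite_kernel_group (φ : ℝ) (hφ : φ = (1 + Real.sqrt 5) / 2)
    (Y0 Y1 Y2 Y3 Y4 : ℝ × ℝ)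
    (hY0 : Y0 = (1, 0))
    (hY1 : Y1 = (1 / (2 * φ), Real.sqrt (2 + φ) / 2))
    (hY2 : Y2 = (-(φ / 2), Real.sqrt (2 + φ) / (2 * φ)))
    (hY3 : Y3 = (-(φ / 2), -(Real.sqrt (2 + φ) / (2 * φ))))
    (hY4 : Y4 = (1 / (2 * φ), -(Real.sqrt (2 + φ) / 2)))
    (Q : AddSubgroup (ℝ × ℝ))
    (hQ : Q = AddSubgroup.closure {Y0, Y1, Y2, Y3, Y4}) :
    {x : Fin 4 → ℝ | x 0 • (-Y1) + x 1 • Y2 + x 2 • (-Y3) + x 3 • Y4 ∈ Q} =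
      {x : Fin 4 → ℝ | ∃ (s t : ℝ) (k : Fin 4 → ℤ),
        x 0 = s - (φ - 1) * t + k 0 ∧
        x 1 = (φ - 1) * (s + t) + k 1 ∧
        x 2 = s + k 2 ∧
        x 3 = t + k 3} := by
  have h5 : Real.sqrt 5 ^ 2 = 5 := Real.sq_sqrt (by norm_num)
  have h5n : (0:ℝ) ≤ Real.sqrt 5 := Real.sqrt_nonneg 5
  have hφ2 : φ ^ 2 = φ + 1 := by rw [hφ]; nlinarith [h5]
  have hφpos : (0:ℝ) < φ := by rw [hφ]; positivity
  have hφ0 : φ ≠ 0 := ne_of_gt hφpos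
  have hc0 : Real.sqrt (2 + φ) ≠ 0 := ne_of_gt (Real.sqrt_pos.mpr (by linarith))
  set c := Real.sqrt (2 + φ) with hcdef
  have hd1 : (1:ℝ) / (2 * φ) = (φ - 1) / 2 := by
    field_simp
    linear_combination (-1 : ℝ) * hφ2
  have hd2 : c / (2 * φ) = (φ - 1) * c / 2 := by
    field_simp
    linear_combination (-1 : ℝ) * hφ2
  rw [hd1] at hY1 hY4
  rw [hd2] at hY2 hY3
  have hY0' : Y0 = (-1:ℝ) • Y1 + (-1:ℝ) • Y2 + (-1:ℝ) • Y3 + (-1:ℝ) • Y4 := by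
    rw [hY0, hY1, hY2, hY3, hY4]
    apply Prod.ext <;>
      simp only [Prod.smul_mk, Prod.fst_add, Prod.snd_add, smul_eq_mul] <;> ring
  ext x
  simp only [Set.mem_setOf_eq]
  constructor
  · intro hv
    have key : ∀ v ∈ Q, ∃ n1 n2 n3 n4 : ℤ,
        v = (n1:ℝ) • Y1 + (n2:ℝ) • Y2 + (n3:ℝ) • Y3 + (n4:ℝ) • Y4 := by
      intro v hvQ
      rw [hQ] at hvQ
      induction hvQ using AddSubgroup.closure_induction with
      | mem y hy =>
        simp only [Set.mem_insert_iff, Set.mem_singleton_iff] at hy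
        rcases hy with h | h | h | h | h
        · exact ⟨-1, -1, -1, -1, by rw [h, hY0']; push_cast; ring_nf⟩
        · exact ⟨1, 0, 0, 0, by rw [h]; push_cast; module⟩
        · exact ⟨0, 1, 0, 0, by rw [h]; push_cast; module⟩
        · exact ⟨0, 0, 1, 0, by rw [h]; push_cast; module⟩
        · exact ⟨0, 0, 0, 1, by rw [h]; push_cast; module⟩
      | zero => exact ⟨0, 0, 0, 0, by push_cast; module⟩
      | add a b ha hb iha ihb =>
        obtain ⟨a1, a2, a3, a4, ha'⟩ := iha
        obtain ⟨b1, b2, b3, b4, hb'⟩ := ihb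
        exact ⟨a1 + b1, a2 + b2, a3 + b3, a4 + b4, by rw [ha', hb']; push_cast; module⟩
      | neg a ha iha =>
        obtain ⟨a1, a2, a3, a4, ha'⟩ := iha
        exact ⟨-a1, -a2, -a3, -a4, by rw [ha']; push_cast; module⟩
    obtain ⟨n1, n2, n3, n4, hv'⟩ := key _ hv
    rw [hY1, hY2, hY3, hY4] at hv'
    have hv1 := congrArg Prod.fst hv'
    have hv2 := congrArg Prod.snd hv'
    simp only [Prod.fst_add, Prod.snd_add, Prod.smul_mk, Prod.neg_mk, Prod.fst_neg,
      Prod.snd_neg, smul_eq_mul] at hv1 hv2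
    have e1 : (φ-1)*(x 3 - x 0) + φ*(x 2 - x 1)
        = (φ-1)*((n1:ℝ)+(n4:ℝ)) - φ*((n2:ℝ)+(n3:ℝ)) := by
      linear_combination 2 * hv1
    have e2 : -(x 0 + x 3) + (φ-1)*(x 1 + x 2)
        = ((n1:ℝ) - (n4:ℝ)) + (φ-1)*((n2:ℝ) - (n3:ℝ)) := by
      apply mul_left_cancel₀ hc0
      linear_combination 2 * hv2
    refine ⟨x 2 + (n3:ℝ), x 3 - (n4:ℝ), ![-n1, n2, -n3, n4], ?_, ?_, ?_, ?_⟩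
    · show x 0 = _ + ((-n1 : ℤ) : ℝ)
      push_cast
      linear_combination (-(φ-1)/2) * e1 + (-φ/2) * e2
        + (-(x 0 - 2*x 2 - x 3 + (n1:ℝ) - 2*(n3:ℝ) + (n4:ℝ))/2) * hφ2
    · show x 1 = _ + ((n2 : ℤ) : ℝ)
      linear_combination (-(1:ℝ)/2) * e1 + ((φ-1)/2) * e2
        + (-(x 1 + x 2 - (n2:ℝ) + (n3:ℝ))/2) * hφ2
    · show x 2 = _ + ((-n3 : ℤ) : ℝ)
      push_cast; ring
    · show x 3 = _ + ((n4 : ℤ) : ℝ)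
      push_cast; ring
  · rintro ⟨s, t, k, h0, h1, h2, h3⟩
    have hmem : ∀ i ∈ ({Y0, Y1, Y2, Y3, Y4} : Set (ℝ × ℝ)), i ∈ Q := by
      rw [hQ]; exact fun i hi => AddSubgroup.subset_closure hi
    have hY1Q : Y1 ∈ Q := hmem Y1 (by simp)
    have hY2Q : Y2 ∈ Q := hmem Y2 (by simp)
    have hY3Q : Y3 ∈ Q := hmem Y3 (by simp)
    have hY4Q : Y4 ∈ Q := hmem Y4 (by simp)
    have heq : x 0 • (-Y1) + x 1 • Y2 + x 2 • (-Y3) + x 3 • Y4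
        = (-(k 0)) • Y1 + (k 1) • Y2 + (-(k 2)) • Y3 + (k 3) • Y4 := by
      rw [← Int.cast_smul_eq_zsmul ℝ (-(k 0)) Y1, ← Int.cast_smul_eq_zsmul ℝ (k 1) Y2,
        ← Int.cast_smul_eq_zsmul ℝ (-(k 2)) Y3, ← Int.cast_smul_eq_zsmul ℝ (k 3) Y4]
      rw [h0, h1, h2, h3, hY1, hY2, hY3, hY4]
      apply Prod.ext
      · simp only [Prod.fst_add, Prod.smul_mk, Prod.neg_mk, Prod.fst_neg, smul_eq_mul]
        push_cast
        linear_combination (-(s)/2) * hφ2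
      · simp only [Prod.snd_add, Prod.smul_mk, Prod.neg_mk, Prod.snd_neg, smul_eq_mul]
        push_cast
        linear_combination (c*(s+t)/2) * hφ2
    rw [heq]
    exact Q.add_mem (Q.add_mem (Q.add_mem (Q.zsmul_mem hY1Q _) (Q.zsmul_mem hY2Q _))
      (Q.zsmul_mem hY3Q _)) (Q.zsmul_mem hY4Q _)
end

section
/- Let φ = (1+√5)/2, let Y₀ = (1,0), Y₁ = (1/(2φ), √(2+φ)/2), Y₂ = (−φ/2, √(2+φ)/(2φ)), Y₃ = (−φ/2, −√(2+φ)/(2φ)), Y₄ = (1/(2φ), −√(2+φ)/2), and let Q ⊆ ℝ² be the set of integer linear combinations of Y₀, Y₁, Y₂, Y₃, Y₄. Then {l ∈ ℝ : (l, 0) ∈ Q} = {a + bφ : a, b ∈ ℤ}. -/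
/-- For the pentagonal quasilattice `Q` and the cutting direction `Y₀ = (1,0)`, the group
`Q¹ = {l ∈ ℝ : lY₀ ∈ Q}` equals `ℤ + φℤ`. -/
theorem penrose_kite_Q1 (φ : ℝ) (hφ : φ = (1 + Real.sqrt 5) / 2)
    (Y0 Y1 Y2 Y3 Y4 : ℝ × ℝ)
    (hY0 : Y0 = (1, 0))
    (hY1 : Y1 = (1 / (2 * φ), Real.sqrt (2 + φ) / 2))
    (hY2 : Y2 = (-(φ / 2), Real.sqrt (2 + φ) / (2 * φ)))
    (hY3 : Y3 = (-(φ / 2), -(Real.sqrt (2 + φ) / (2 * φ))))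
    (hY4 : Y4 = (1 / (2 * φ), -(Real.sqrt (2 + φ) / 2)))
    (Q : AddSubgroup (ℝ × ℝ))
    (hQ : Q = AddSubgroup.closure {Y0, Y1, Y2, Y3, Y4}) :
    {l : ℝ | (l, (0 : ℝ)) ∈ Q} = {x : ℝ | ∃ a b : ℤ, x = (a : ℝ) + (b : ℝ) * φ} := by
  have h5 : (0:ℝ) ≤ 5 := by norm_num
  have hsq : Real.sqrt 5 ^ 2 = 5 := Real.sq_sqrt h5
  have hφpos : 0 < φ := by
    rw [hφ]; positivity
  have hφ0 : φ ≠ 0 := ne_of_gt hφpos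
  have hφ2 : φ ^ 2 = φ + 1 := by
    rw [hφ]; field_simp; nlinarith [hsq]
  have hirr : Irrational φ := by
    rw [hφ]
    have h5p : Nat.Prime 5 := by norm_num
    have h := (Irrational.natCast_add h5p.irrational_sqrt 1).div_natCast (m := 2) (by norm_num)
    convert h using 2 <;> norm_num
  set s : ℝ := Real.sqrt (2 + φ) with hs
  have hs0 : s ≠ 0 := by
    have : (0:ℝ) < 2 + φ := by linarith
    positivity
  -- the subgroup of explicit integer combinations
  let S : AddSubgroup (ℝ × ℝ) :=
    { carrier := {p | ∃ n0 n1 n2 n3 n4 : ℤ,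
        p.1 = (n0:ℝ) + ((n1:ℝ) + n4) / (2 * φ) - ((n2:ℝ) + n3) * φ / 2 ∧
        p.2 = ((n1:ℝ) - n4) * s / 2 + ((n2:ℝ) - n3) * s / (2 * φ)}
      zero_mem' := ⟨0, 0, 0, 0, 0, by norm_num, by norm_num⟩
      add_mem' := by
        rintro p q ⟨a0, a1, a2, a3, a4, hp1, hp2⟩ ⟨b0, b1, b2, b3, b4, hq1, hq2⟩
        refine ⟨a0 + b0, a1 + b1, a2 + b2, a3 + b3, a4 + b4, ?_, ?_⟩
        · show p.1 + q.1 = _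
          rw [hp1, hq1]; push_cast; ring
        · show p.2 + q.2 = _
          rw [hp2, hq2]; push_cast; ring
      neg_mem' := by
        rintro p ⟨a0, a1, a2, a3, a4, hp1, hp2⟩
        refine ⟨-a0, -a1, -a2, -a3, -a4, ?_, ?_⟩
        · show -p.1 = _
          rw [hp1]; push_cast; ring
        · show -p.2 = _
          rw [hp2]; push_cast; ring }
  have hQS : Q ≤ S := by
    rw [hQ]
    apply (AddSubgroup.closure_le S).mpr
    intro y hy
    simp only [Set.mem_insert_iff, Set.mem_singleton_iff] at hy
    rcases hy with rfl | rfl | rfl | rfl | rfl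
    · exact ⟨1, 0, 0, 0, 0, by rw [hY0]; norm_num, by rw [hY0]; norm_num⟩
    · exact ⟨0, 1, 0, 0, 0, by rw [hY1]; norm_num, by rw [hY1]; push_cast; ring⟩
    · exact ⟨0, 0, 1, 0, 0, by rw [hY2]; push_cast; ring, by rw [hY2]; push_cast; ring⟩
    · exact ⟨0, 0, 0, 1, 0, by rw [hY3]; push_cast; ring, by rw [hY3]; push_cast; ring⟩
    · exact ⟨0, 0, 0, 0, 1, by rw [hY4]; norm_num, by rw [hY4]; push_cast; ring⟩
  ext l
  simp only [Set.mem_setOf_eq]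
  constructor
  · intro hl
    obtain ⟨n0, n1, n2, n3, n4, h1, h2⟩ := hQS hl
    simp only at h1 h2
    -- from the second coordinate: (n1-n4)*φ + (n2-n3) = 0
    have key : ((n1:ℝ) - n4) * φ + ((n2:ℝ) - n3) = 0 := by
      have h2' : s * (((n1:ℝ) - n4) * φ + ((n2:ℝ) - n3)) = 0 := by
        have := h2.symm
        field_simp at this ⊢
        linarith [this]
      rcases mul_eq_zero.mp h2' with h | h
      · exact absurd h hs0
      · exact h
    have h14 : n1 = n4 := by
      by_contra hne
      have hne' : ((n1:ℝ) - n4) ≠ 0 := by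
        intro h; apply hne; exact_mod_cast sub_eq_zero.mp h
      apply hirr
      refine ⟨(((n3 - n2 : ℤ) : ℚ) / ((n1 - n4 : ℤ) : ℚ)), ?_⟩
      push_cast
      field_simp
      linarith [key]
    have h23 : n2 = n3 := by
      have : ((n2:ℝ) - n3) = 0 := by
        rw [h14] at key; simpa using key
      exact_mod_cast sub_eq_zero.mp this
    refine ⟨n0 - n1, n1 - n2, ?_⟩
    rw [h1, h14, h23]
    push_cast
    field_simp
    linear_combination (-2*(n4:ℝ)) * hφ2
  · rintro ⟨a, b, rfl⟩
    have heq : (((a:ℝ) + (b:ℝ) * φ, (0:ℝ)) : ℝ × ℝ) = a • Y0 + (-b) • Y2 + (-b) • Y3 := by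
      rw [hY0, hY2, hY3]
      simp only [Prod.smul_mk, Prod.mk_add_mk, Prod.mk.injEq, zsmul_eq_mul]
      constructor
      · push_cast; ring
      · push_cast; ring
    rw [hQ, heq]
    refine add_mem (add_mem (zsmul_mem (AddSubgroup.subset_closure ?_) _)
      (zsmul_mem (AddSubgroup.subset_closure ?_) _)) (zsmul_mem (AddSubgroup.subset_closure ?_) _)
    · simp
    · simp
    · simp
end
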